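/- Let n ≥ 1 and let μ_1, …, μ_n satisfy 0 < μ_1 ≤ μ_2 ≤ … ≤ μ_n. Let D be the first canonical form matrix of μ and let π be a probability vector such that (π, D) represents the unit exponential distribution. Then π_i = (1/μ_i) · ∏_{j=i+1}^{n} (1 − 1/μ_j) for every i with 2 ≤ i ≤ n (the empty product for i = n being 1), and π_1 = ∏_{j=2}^{n} (1 − 1/μ_j). -/

import Mathlib

open Matrix

/-- The first canonical form matrix of rates `μ`: diagonal `-μ i`, superdiagonal `μ i`. -/
def canonD {n : ℕ} (μ : Fin n → ℝ) : Matrix (Fin n) (Fin n) ℝ :=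
  Matrix.of fun i j => if j = i then -μ i else if (j : ℕ) = (i : ℕ) + 1 then μ i else 0

/-- `(π, D)` represents the unit exponential distribution:
`π · exp(tD) · 𝟙 = e^{-t}` for all `t ≥ 0`. -/
def ReprUnitExp {n : ℕ} (π : Fin n → ℝ) (D : Matrix (Fin n) (Fin n) ℝ) : Prop :=
  ∀ t : ℝ, 0 ≤ t → (π ᵥ* NormedSpace.exp (t • D)) ⬝ᵥ (fun _ => 1) = Real.exp (-t)

namespace Stmt1Aux

variable {n : ℕ}

/-- `D^k 𝟙`. -/
noncomputable def wv (μ : Fin n → ℝ) (k : ℕ) : Fin n → ℝ :=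
  (canonD μ ^ k) *ᵥ (fun _ => 1)

lemma wv_zero (μ : Fin n → ℝ) : wv μ 0 = fun _ => (1 : ℝ) := by
  simp [wv]

lemma wv_succ (μ : Fin n → ℝ) (k : ℕ) : wv μ (k + 1) = canonD μ *ᵥ wv μ k := by
  rw [wv, wv, Matrix.mulVec_mulVec, ← pow_succ']

lemma canonD_mulVec_apply (μ v : Fin n → ℝ) (i : Fin n) :
    (canonD μ *ᵥ v) i =
      -(μ i * v i) + (if h : (i : ℕ) + 1 < n then μ i * v ⟨(i : ℕ) + 1, h⟩ else 0) := by
  classical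
  have hexp : (canonD μ *ᵥ v) i = ∑ j, canonD μ i j * v j := rfl
  rw [hexp]
  have hsplit : ∀ j : Fin n, canonD μ i j * v j =
      (if j = i then -(μ i * v i) else 0) +
        (if h : (i : ℕ) + 1 < n then (if j = ⟨(i : ℕ) + 1, h⟩ then μ i * v j else 0) else 0) := by
    intro j
    simp only [canonD, Matrix.of_apply]
    by_cases h1 : j = i
    · subst h1
      by_cases h : (j : ℕ) + 1 < n
      · rw [dif_pos h, if_pos rfl, if_pos rfl, if_neg (by simp [Fin.ext_iff]), add_zero, neg_mul]
      · rw [dif_neg h, if_pos rfl, if_pos rfl, add_zero, neg_mul]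
    · rw [if_neg h1, if_neg h1]
      by_cases h : (i : ℕ) + 1 < n
      · rw [dif_pos h]
        by_cases h2 : j = ⟨(i : ℕ) + 1, h⟩
        · rw [if_pos h2, if_pos (by simp [h2]), zero_add]
        · rw [if_neg h2, if_neg (by
            intro hc
            exact h2 (by simp [Fin.ext_iff, hc])), zero_add, zero_mul]
      · rw [dif_neg h, if_neg (by
          intro hc
          exact h (hc ▸ j.isLt)), zero_add, zero_mul]
  rw [Finset.sum_congr rfl fun j _ => hsplit j, Finset.sum_add_distrib]
  congr 1
  · rw [Finset.sum_ite_eq' Finset.univ i fun _ => -(μ i * v i)]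
    simp
  · by_cases h : (i : ℕ) + 1 < n
    · simp only [dif_pos h]
      rw [Finset.sum_ite_eq' Finset.univ (⟨(i : ℕ) + 1, h⟩ : Fin n) fun j => μ i * v j]
      simp
    · simp [h]

lemma canonD_vecMul_apply (μ x : Fin n → ℝ) (j : Fin n) :
    (x ᵥ* canonD μ) j =
      -(x j * μ j) + (if h : 1 ≤ (j : ℕ) then
        x ⟨(j : ℕ) - 1, lt_of_le_of_lt (Nat.sub_le _ _) j.isLt⟩ *
          μ ⟨(j : ℕ) - 1, lt_of_le_of_lt (Nat.sub_le _ _) j.isLt⟩ else 0) := by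
  classical
  have hexp : (x ᵥ* canonD μ) j = ∑ i, x i * canonD μ i j := rfl
  by_cases h : 1 ≤ (j : ℕ)
  · set j' : Fin n := ⟨(j : ℕ) - 1, lt_of_le_of_lt (Nat.sub_le _ _) j.isLt⟩ with hj'
    have hne : j' ≠ j := Fin.ne_of_val_ne (show (j : ℕ) - 1 ≠ (j : ℕ) by omega)
    rw [hexp, dif_pos h]
    rw [← Finset.sum_subset (Finset.subset_univ {j', j})]
    · rw [Finset.sum_pair hne]
      have e1 : canonD μ j' j = μ j' := by
        simp only [canonD, Matrix.of_apply]
        rw [if_neg (fun hc => hne hc.symm),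
          if_pos (show (j : ℕ) = (j : ℕ) - 1 + 1 by omega)]
      have e2 : canonD μ j j = -μ j := by
        simp [canonD]
      rw [e1, e2]
      ring
    · intro i _ hi
      simp only [Finset.mem_insert, Finset.mem_singleton] at hi
      push_neg at hi
      have hz : canonD μ i j = 0 := by
        simp only [canonD, Matrix.of_apply]
        rw [if_neg (fun hc => hi.2 hc.symm), if_neg (by
          intro hc
          exact hi.1 (by simp only [hj', Fin.ext_iff]; omega))]
      rw [hz, mul_zero]
  · rw [hexp, dif_neg h, add_zero]
    rw [Finset.sum_eq_single j]
    · have e2 : canonD μ j j = -μ j := by simp [canonD]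
      rw [e2]
      ring
    · intro i _ hi
      have hz : canonD μ i j = 0 := by
        simp only [canonD, Matrix.of_apply]
        rw [if_neg (fun hc => hi hc.symm), if_neg (by omega)]
      rw [hz, mul_zero]
    · intro hj
      exact absurd (Finset.mem_univ j) hj

lemma wv_support (μ : Fin n → ℝ) :
    ∀ k : ℕ, ∀ i : Fin n, (i : ℕ) + k + 1 < n → wv μ (k + 1) i = 0 := by
  intro k
  induction k with
  | zero =>
    intro i hi
    rw [wv_succ, wv_zero, canonD_mulVec_apply]
    rw [dif_pos (by omega)]
    ring
  | succ k ih =>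
    intro i hi
    rw [wv_succ, canonD_mulVec_apply]
    rw [ih i (by omega), dif_pos (by omega), ih ⟨(i : ℕ) + 1, by omega⟩ (by simp; omega)]
    ring

lemma Ioi_eq_empty (i : Fin n) (h : (i : ℕ) + 1 = n) : Finset.Ioi i = ∅ := by
  ext j
  simp only [Finset.mem_Ioi, Finset.notMem_empty, iff_false]
  intro hij
  have h2 := j.isLt
  rw [Fin.lt_def] at hij
  omega

lemma Ioi_eq_insert (i : Fin n) (h : (i : ℕ) + 1 < n) :
    Finset.Ioi i = insert (⟨(i : ℕ) + 1, h⟩ : Fin n) (Finset.Ioi (⟨(i : ℕ) + 1, h⟩ : Fin n)) := by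
  ext j
  simp only [Finset.mem_Ioi, Finset.mem_insert, Fin.lt_def, Fin.ext_iff]
  omega

lemma wv_leading (μ : Fin n → ℝ) :
    ∀ k : ℕ, ∀ i : Fin n, (i : ℕ) + (k + 1) = n →
      wv μ (k + 1) i = -(μ i * ∏ j ∈ Finset.Ioi i, μ j) := by
  intro k
  induction k with
  | zero =>
    intro i hi
    rw [wv_succ, wv_zero, canonD_mulVec_apply, dif_neg (by omega), Ioi_eq_empty i (by omega)]
    simp
  | succ k ih =>
    intro i hi
    have h1 : (i : ℕ) + 1 < n := by omega
    rw [wv_succ, canonD_mulVec_apply, dif_pos h1,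
      wv_support μ k i (by omega), ih ⟨(i : ℕ) + 1, h1⟩ (by simp; omega),
      Ioi_eq_insert i h1, Finset.prod_insert (by simp)]
    ring

/-- The candidate solution. -/
noncomputable def cand (μ : Fin n → ℝ) : Fin n → ℝ := fun i =>
  if (i : ℕ) = 0 then ∏ j ∈ Finset.Ioi i, (1 - 1 / μ j)
  else (1 / μ i) * ∏ j ∈ Finset.Ioi i, (1 - 1 / μ j)

lemma cand_sum_Ioi (μ : Fin n → ℝ) :
    ∀ k : ℕ, ∀ i : Fin n, (i : ℕ) + k + 1 = n →
      ∑ j ∈ Finset.Ioi i, cand μ j = 1 - ∏ j ∈ Finset.Ioi i, (1 - 1 / μ j) := by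
  intro k
  induction k with
  | zero =>
    intro i hi
    rw [Ioi_eq_empty i (by omega)]
    simp
  | succ k ih =>
    intro i hi
    have h1 : (i : ℕ) + 1 < n := by omega
    set i' : Fin n := ⟨(i : ℕ) + 1, h1⟩ with hi'
    rw [Ioi_eq_insert i h1, Finset.sum_insert (by simp), Finset.prod_insert (by simp),
      ih i' (by simp [hi']; omega)]
    have hc : cand μ i' = (1 / μ i') * ∏ j ∈ Finset.Ioi i', (1 - 1 / μ j) := by
      rw [cand, if_neg (by simp [hi'])]
    rw [hc]
    ring

lemma cand_sum (μ : Fin n → ℝ) (hn : 0 < n) : ∑ i, cand μ i = 1 := by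
  have h0 : (Finset.univ : Finset (Fin n)) =
      insert (⟨0, hn⟩ : Fin n) (Finset.Ioi (⟨0, hn⟩ : Fin n)) := by
    ext j
    simp only [Finset.mem_univ, Finset.mem_insert, Finset.mem_Ioi, true_iff, Fin.lt_def,
      Fin.ext_iff]
    omega
  rw [h0, Finset.sum_insert (by simp), cand_sum_Ioi μ (n - 1) ⟨0, hn⟩ (by simp; omega)]
  have hc : cand μ ⟨0, hn⟩ = ∏ j ∈ Finset.Ioi (⟨0, hn⟩ : Fin n), (1 - 1 / μ j) := by
    rw [cand, if_pos rfl]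
  rw [hc]
  ring

/-- Moments of the true vector, by differentiating the representation. -/
lemma moments (μ : Fin n → ℝ) (π : Fin n → ℝ) (hrep : ReprUnitExp π (canonD μ)) (k : ℕ) :
    π ⬝ᵥ wv μ k = (-1 : ℝ) ^ k := by
  classical
  letI : SeminormedRing (Matrix (Fin n) (Fin n) ℝ) := Matrix.linftyOpSemiNormedRing
  letI : NormedRing (Matrix (Fin n) (Fin n) ℝ) := Matrix.linftyOpNormedRing
  letI : NormedAlgebra ℝ (Matrix (Fin n) (Fin n) ℝ) := Matrix.linftyOpNormedAlgebra
  letI : CompleteSpace (Matrix (Fin n) (Fin n) ℝ) :=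
    FiniteDimensional.complete ℝ (Matrix (Fin n) (Fin n) ℝ)
  set A : Matrix (Fin n) (Fin n) ℝ := canonD μ with hA
  -- the function and its derivative
  have hder : ∀ (m : ℕ) (t : ℝ),
      HasDerivAt (fun s : ℝ => (π ᵥ* NormedSpace.exp (s • A)) ⬝ᵥ wv μ m)
        ((π ᵥ* NormedSpace.exp (t • A)) ⬝ᵥ wv μ (m + 1)) t := by
    intro m t
    have hmulsum : ∀ (c : ℝ) (M : Matrix (Fin n) (Fin n) ℝ) (j : Fin n),
        (∑ i, π i * (c * M i j)) = c * ∑ i, π i * M i j := by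
      intro c M j
      rw [Finset.mul_sum]
      exact Finset.sum_congr rfl fun i _ => by ring
    let L : Matrix (Fin n) (Fin n) ℝ →ₗ[ℝ] ℝ :=
      { toFun := fun M => ∑ j, (∑ i, π i * M i j) * wv μ m j
        map_add' := by
          intro M N
          rw [← Finset.sum_add_distrib]
          refine Finset.sum_congr rfl fun j _ => ?_
          rw [← add_mul, ← Finset.sum_add_distrib]
          congr 1
          exact Finset.sum_congr rfl fun i _ => by simp [Matrix.add_apply]; ring
        map_smul' := by
          intro c M
          simp only [Matrix.smul_apply, smul_eq_mul, RingHom.id_apply]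
          rw [Finset.mul_sum]
          refine Finset.sum_congr rfl fun j _ => ?_
          rw [hmulsum c M j]
          ring }
    have hLapp : ∀ M : Matrix (Fin n) (Fin n) ℝ, L M = (π ᵥ* M) ⬝ᵥ wv μ m := by
      intro M
      simp only [L, LinearMap.coe_mk, AddHom.coe_mk]
      rfl
    have h1 : HasDerivAt (fun s : ℝ => NormedSpace.exp (s • A))
        (NormedSpace.exp (t • A) * A) t := hasDerivAt_exp_smul_const A t
    have h2 := (LinearMap.toContinuousLinearMap L).hasFDerivAt
      (x := NormedSpace.exp (t • A))
    have h3 : HasDerivAt (fun s : ℝ => L (NormedSpace.exp (s • A)))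
        (L (NormedSpace.exp (t • A) * A)) t := by
      have := h2.comp_hasDerivAt t h1
      exact this
    have hval : L (NormedSpace.exp (t • A) * A)
        = (π ᵥ* NormedSpace.exp (t • A)) ⬝ᵥ wv μ (m + 1) := by
      rw [hLapp, ← Matrix.vecMul_vecMul, wv_succ, Matrix.dotProduct_mulVec]
    rw [hval] at h3
    refine h3.congr_of_eventuallyEq ?_
    filter_upwards with s
    rw [hLapp]
  have key : ∀ (m : ℕ) (t : ℝ), 0 ≤ t →
      (π ᵥ* NormedSpace.exp (t • A)) ⬝ᵥ wv μ m = (-1 : ℝ) ^ m * Real.exp (-t) := by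
    intro m
    induction m with
    | zero =>
      intro t ht
      rw [wv_zero]
      simpa using hrep t ht
    | succ m ih =>
      have hposcase : ∀ t : ℝ, 0 < t →
          (π ᵥ* NormedSpace.exp (t • A)) ⬝ᵥ wv μ (m + 1)
            = (-1 : ℝ) ^ (m + 1) * Real.exp (-t) := by
        intro t ht
        have h1 := hder m t
        have heq : (fun s : ℝ => (π ᵥ* NormedSpace.exp (s • A)) ⬝ᵥ wv μ m)
            =ᶠ[nhds t] fun s : ℝ => (-1 : ℝ) ^ m * Real.exp (-s) :=
          Filter.eventuallyEq_of_mem (Ioi_mem_nhds ht) fun s hs => ih s (le_of_lt hs)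
        have h2 : HasDerivAt (fun s : ℝ => (-1 : ℝ) ^ m * Real.exp (-s))
            ((-1 : ℝ) ^ (m + 1) * Real.exp (-t)) t := by
          have := ((Real.hasDerivAt_exp (-t)).comp t ((hasDerivAt_id t).neg)).const_mul
            ((-1 : ℝ) ^ m)
          refine this.congr_deriv ?_
          ring
        exact ((h1.congr_of_eventuallyEq heq.symm).unique h2)
      intro t ht
      rcases eq_or_lt_of_le ht with h | h
      · subst h
        have hc : ContinuousAt
            (fun s : ℝ => (π ᵥ* NormedSpace.exp (s • A)) ⬝ᵥ wv μ (m + 1)) 0 :=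
          (hder (m + 1) 0).continuousAt
        have t1 : Filter.Tendsto
            (fun s : ℝ => (π ᵥ* NormedSpace.exp (s • A)) ⬝ᵥ wv μ (m + 1))
            (nhdsWithin 0 (Set.Ioi 0))
            (nhds ((π ᵥ* NormedSpace.exp ((0 : ℝ) • A)) ⬝ᵥ wv μ (m + 1))) :=
          hc.tendsto.mono_left nhdsWithin_le_nhds
        have t2 : Filter.Tendsto
            (fun s : ℝ => (π ᵥ* NormedSpace.exp (s • A)) ⬝ᵥ wv μ (m + 1))
            (nhdsWithin 0 (Set.Ioi 0))
            (nhds ((-1 : ℝ) ^ (m + 1) * Real.exp (-0))) := by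
          have tcont : Filter.Tendsto (fun s : ℝ => (-1 : ℝ) ^ (m + 1) * Real.exp (-s))
              (nhdsWithin 0 (Set.Ioi 0)) (nhds ((-1 : ℝ) ^ (m + 1) * Real.exp (-0))) := by
            exact ((continuous_const.mul
              (Real.continuous_exp.comp continuous_neg)).continuousAt.tendsto.mono_left
              nhdsWithin_le_nhds)
          refine tcont.congr' ?_
          filter_upwards [self_mem_nhdsWithin] with s hs
          exact (hposcase s hs).symm
        have := tendsto_nhds_unique t1 t2
        simpa using this
      · exact hposcase t h
  have := key k 0 le_rfl
  simpa [Matrix.vecMul_one] using this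

section Main

variable (μ : Fin n → ℝ)

lemma Q_rec (i : Fin n) (h : (i : ℕ) + 1 < n) :
    ∏ j ∈ Finset.Ioi i, (1 - 1 / μ j)
      = (1 - 1 / μ ⟨(i : ℕ) + 1, h⟩) *
        ∏ j ∈ Finset.Ioi (⟨(i : ℕ) + 1, h⟩ : Fin n), (1 - 1 / μ j) := by
  rw [Ioi_eq_insert i h, Finset.prod_insert (by simp)]

/-- The candidate moments. -/
lemma cand_moments (hpos : ∀ i, 0 < μ i) (hn2 : 2 ≤ n) :
    ∀ k : ℕ, k ≤ n - 1 → cand μ ⬝ᵥ wv μ k = (-1 : ℝ) ^ k := by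
  have i0lt : 0 < n := by omega
  have i1lt : 1 < n := by omega
  set i0 : Fin n := ⟨0, i0lt⟩ with hi0
  set i1 : Fin n := ⟨1, i1lt⟩ with hi1
  set Q0 : ℝ := ∏ j ∈ Finset.Ioi i0, (1 - 1 / μ j) with hQ0
  -- vecMul values of the candidate
  have hvm : ∀ j : Fin n, (cand μ ᵥ* canonD μ) j =
      -(cand μ j) + (if (j : ℕ) = 0 then (1 - μ i0) * Q0
        else if (j : ℕ) = 1 then (μ i0 - 1) * Q0 else 0) := by
    intro j
    rw [canonD_vecMul_apply]
    by_cases h0 : (j : ℕ) = 0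
    · have hj : j = i0 := by simp [hi0, Fin.ext_iff, h0]
      subst hj
      rw [dif_neg (by omega), if_pos rfl]
      have : cand μ i0 = Q0 := by rw [cand, if_pos rfl]
      rw [this]
      ring
    · have h1le : 1 ≤ (j : ℕ) := by omega
      rw [dif_pos h1le, if_neg h0]
      set j' : Fin n := ⟨(j : ℕ) - 1, lt_of_le_of_lt (Nat.sub_le _ _) j.isLt⟩ with hj'
      have hcj : cand μ j = (1 / μ j) * ∏ l ∈ Finset.Ioi j, (1 - 1 / μ l) := by
        rw [cand, if_neg h0]
      have hQrec : ∏ l ∈ Finset.Ioi j', (1 - 1 / μ l)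
          = (1 - 1 / μ j) * ∏ l ∈ Finset.Ioi j, (1 - 1 / μ l) := by
        have hlt : (j' : ℕ) + 1 < n := by simp [hj']; omega
        have : (⟨(j' : ℕ) + 1, hlt⟩ : Fin n) = j := by simp [hj', Fin.ext_iff]; omega
        rw [Q_rec μ j' hlt, this]
      by_cases h1 : (j : ℕ) = 1
      · have hj'0 : j' = i0 := by simp [hj', hi0, Fin.ext_iff]; omega
        rw [if_pos h1, hcj]
        have hcj' : cand μ j' = Q0 := by rw [hj'0, cand, if_pos rfl]
        rw [hcj', hj'0]
        have hQ0j : Q0 = (1 - 1 / μ j) * ∏ l ∈ Finset.Ioi j, (1 - 1 / μ l) := by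
          rw [hQ0, ← hj'0, hQrec]
        have hμj : μ j ≠ 0 := ne_of_gt (hpos j)
        rw [hQ0j]
        field_simp
        ring
      · rw [if_neg h1, hcj]
        have hcj' : cand μ j' = (1 / μ j') * ∏ l ∈ Finset.Ioi j', (1 - 1 / μ l) := by
          rw [cand, if_neg (by simp [hj']; omega)]
        rw [hcj', hQrec]
        have hμj : μ j ≠ 0 := ne_of_gt (hpos j)
        have hμj' : μ j' ≠ 0 := ne_of_gt (hpos j')
        field_simp
        ring
    -- end hvm
  intro k
  induction k with
  | zero =>
    intro _
    rw [wv_zero]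
    have : cand μ ⬝ᵥ (fun _ => (1 : ℝ)) = ∑ i, cand μ i := by
      simp [dotProduct]
    rw [this, cand_sum μ i0lt]
    norm_num
  | succ k ih =>
    intro hk
    have ihv := ih (by omega)
    rw [wv_succ, Matrix.dotProduct_mulVec]
    have hsplit : (cand μ ᵥ* canonD μ) ⬝ᵥ wv μ k
        = -(cand μ ⬝ᵥ wv μ k) + ∑ j : Fin n, (if (j : ℕ) = 0 then (1 - μ i0) * Q0
            else if (j : ℕ) = 1 then (μ i0 - 1) * Q0 else 0) * wv μ k j := by
      rw [dotProduct, dotProduct, ← Finset.sum_neg_distrib,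
        ← Finset.sum_add_distrib]
      refine Finset.sum_congr rfl fun j _ => ?_
      rw [hvm j]
      ring
    rw [hsplit, ihv]
    have hcorr : ∑ j : Fin n, (if (j : ℕ) = 0 then (1 - μ i0) * Q0
        else if (j : ℕ) = 1 then (μ i0 - 1) * Q0 else 0) * wv μ k j
        = (1 - μ i0) * Q0 * wv μ k i0 + (μ i0 - 1) * Q0 * wv μ k i1 := by
      rw [← Finset.sum_subset (Finset.subset_univ {i0, i1})]
      · rw [Finset.sum_pair (by simp [hi0, hi1, Fin.ext_iff])]
        simp [hi0, hi1]
      · intro j _ hj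
        simp only [Finset.mem_insert, Finset.mem_singleton] at hj
        push_neg at hj
        have hj0 : ¬ (j : ℕ) = 0 := fun hc => hj.1 (by simp [hi0, Fin.ext_iff, hc])
        have hj1 : ¬ (j : ℕ) = 1 := fun hc => hj.2 (by simp [hi1, Fin.ext_iff, hc])
        rw [if_neg hj0, if_neg hj1, zero_mul]
    rw [hcorr]
    rcases Nat.eq_zero_or_pos k with hk0 | hk1
    · subst hk0
      rw [wv_zero]
      ring
    · obtain ⟨k', rfl⟩ := Nat.exists_eq_add_of_lt hk1
      simp only [zero_add] at *
      rw [wv_support μ k' i0 (by simp [hi0]; omega), wv_support μ k' i1 (by simp [hi1]; omega)]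
      ring

/-- Uniqueness at indices `≥ 1`. -/
lemma unique_aux (hpos : ∀ i, 0 < μ i) (π : Fin n → ℝ) (hn2 : 2 ≤ n)
    (hm : ∀ k : ℕ, π ⬝ᵥ wv μ k = (-1 : ℝ) ^ k) :
    ∀ k : ℕ, ∀ i : Fin n, (i : ℕ) + (k + 1) = n → 1 ≤ (i : ℕ) → π i = cand μ i := by
  intro k
  induction k using Nat.strong_induction_on with
  | _ k IH =>
    intro i hik hi1
    have hkn : k + 1 ≤ n - 1 := by omega
    have hdiff : ∑ j, (π j - cand μ j) * wv μ (k + 1) j = 0 := by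
      have h1 := hm (k + 1)
      have h2 := cand_moments μ hpos hn2 (k + 1) hkn
      have : π ⬝ᵥ wv μ (k + 1) - cand μ ⬝ᵥ wv μ (k + 1) = 0 := by rw [h1, h2]; ring
      rw [dotProduct, dotProduct, ← Finset.sum_sub_distrib] at this
      rw [← this]
      exact Finset.sum_congr rfl fun j _ => by ring
    have hsingle : ∀ j : Fin n, j ≠ i → (π j - cand μ j) * wv μ (k + 1) j = 0 := by
      intro j hj
      rcases lt_trichotomy ((j : ℕ)) ((i : ℕ)) with h | h | h
      · rw [wv_support μ k j (by omega)]
        ring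
      · exact absurd (Fin.ext h) hj
      · have hj1 : 1 ≤ (j : ℕ) := by omega
        have hjn : (j : ℕ) + (n - 1 - (j : ℕ) + 1) = n := by
          have := j.isLt; omega
        have hlt : n - 1 - (j : ℕ) < k := by omega
        rw [IH (n - 1 - (j : ℕ)) hlt j hjn hj1]
        ring
    have hsum := Finset.sum_eq_single i (fun j _ hj => hsingle j hj)
      (fun h => absurd (Finset.mem_univ i) h)
    rw [hsum] at hdiff
    have hlead : wv μ (k + 1) i = -(μ i * ∏ j ∈ Finset.Ioi i, μ j) := wv_leading μ k i hik
    have hne : wv μ (k + 1) i ≠ 0 := by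
      rw [hlead]
      have hp : 0 < μ i * ∏ j ∈ Finset.Ioi i, μ j :=
        mul_pos (hpos i) (Finset.prod_pos fun j _ => hpos j)
      exact neg_ne_zero.mpr (ne_of_gt hp)
    have := mul_eq_zero.mp hdiff
    rcases this with h | h
    · linarith [sub_eq_zero.mp (by linarith : π i - cand μ i = 0)]
    · exact absurd h hne

end Main

end Stmt1Aux

open Stmt1Aux in
theorem stmt1 {n : ℕ} (hn : 0 < n) (μ : Fin n → ℝ) (hpos : ∀ i, 0 < μ i)
    (hmono : Monotone μ) (π : Fin n → ℝ) (hnonneg : ∀ i, 0 ≤ π i)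
    (hsum : ∑ i, π i = 1) (hrep : ReprUnitExp π (canonD μ)) :
    (∀ i : Fin n, 1 ≤ (i : ℕ) →
        π i = (1 / μ i) * ∏ j ∈ Finset.Ioi i, (1 - 1 / μ j)) ∧
      π ⟨0, hn⟩ = ∏ j ∈ Finset.Ioi (⟨0, hn⟩ : Fin n), (1 - 1 / μ j) := by
  have hm := moments μ π hrep
  have hpart1 : ∀ i : Fin n, 1 ≤ (i : ℕ) → π i = cand μ i := by
    intro i hi
    have hn2 : 2 ≤ n := by have := i.isLt; omega
    exact unique_aux μ hpos π hn2 hm (n - 1 - (i : ℕ)) i (by have := i.isLt; omega) hi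
  constructor
  · intro i hi
    rw [hpart1 i hi, cand, if_neg (by omega)]
  · set i0 : Fin n := ⟨0, hn⟩ with hi0
    have hsum' : ∑ i, cand μ i = 1 := cand_sum μ hn
    have h1 : ∑ i, π i = π i0 + ∑ i ∈ Finset.univ.erase i0, π i :=
      (Finset.add_sum_erase _ _ (Finset.mem_univ i0)).symm
    have h2 : ∑ i, cand μ i = cand μ i0 + ∑ i ∈ Finset.univ.erase i0, cand μ i :=
      (Finset.add_sum_erase _ _ (Finset.mem_univ i0)).symm
    have h3 : ∑ i ∈ Finset.univ.erase i0, π i = ∑ i ∈ Finset.univ.erase i0, cand μ i := by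
      refine Finset.sum_congr rfl fun j hj => ?_
      have hj0 : j ≠ i0 := (Finset.mem_erase.mp hj).1
      have : 1 ≤ (j : ℕ) := by
        rcases Nat.eq_zero_or_pos (j : ℕ) with h | h
        · exact absurd (Fin.ext (by simp [hi0, h])) hj0
        · omega
      exact hpart1 j this
    have hc0 : cand μ i0 = ∏ j ∈ Finset.Ioi i0, (1 - 1 / μ j) := by
      rw [cand, if_pos rfl]
    rw [hsum] at h1
    rw [hsum'] at h2
    rw [h3] at h1
    rw [← hc0]
    linarith
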